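/- For every x ∈ ℝ, x + φ(x)/Φ(x) > 0, where φ and Φ are the standard normal density and cumulative distribution function. -/

import Mathlib

open MeasureTheory

/-- Standard normal density `φ`. -/
noncomputable def stdNormalPDF (x : ℝ) : ℝ :=
  (Real.sqrt (2 * Real.pi))⁻¹ * Real.exp (-(x ^ 2) / 2)

/-- Standard normal CDF `Φ`. -/
noncomputable def stdNormalCDF (x : ℝ) : ℝ := ∫ t in Set.Iic x, stdNormalPDF t

open Real Filter Set
lemma pdf_pos (x : ℝ) : 0 < stdNormalPDF x := by
  unfold stdNormalPDF
  positivity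

lemma pdf_eq (x : ℝ) : stdNormalPDF x = (Real.sqrt (2 * Real.pi))⁻¹ * Real.exp (-(1/2) * x ^ 2) := by
  unfold stdNormalPDF; ring_nf

lemma integrable_pdf : Integrable stdNormalPDF := by
  have h := (integrable_exp_neg_mul_sq (show (0:ℝ) < 1/2 by norm_num)).const_mul
    (Real.sqrt (2 * Real.pi))⁻¹
  exact h.congr (by filter_upwards with t; rw [pdf_eq])

lemma integrable_mul_pdf : Integrable (fun t => t * stdNormalPDF t) := by
  have h := ((integrable_mul_exp_neg_mul_sq (show (0:ℝ) < 1/2 by norm_num)).const_mul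
    (Real.sqrt (2 * Real.pi))⁻¹)
  exact h.congr (by filter_upwards with t; rw [pdf_eq]; ring)

lemma tendsto_pdf_atBot : Tendsto stdNormalPDF atBot (nhds 0) := by
  have hsq : Tendsto (fun x : ℝ => x ^ 2 / 2) atBot atTop := by
    apply Tendsto.atTop_div_const (by norm_num)
    have habs : Tendsto (fun x : ℝ => |x|) atBot atTop := tendsto_abs_atBot_atTop
    have hpow : Tendsto (fun y : ℝ => y ^ 2) atTop atTop := tendsto_pow_atTop two_ne_zero
    exact (hpow.comp habs).congr (fun t => by simp [sq_abs])
  have h1 : Tendsto (fun x : ℝ => -(x ^ 2) / 2) atBot atBot := by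
    have h := tendsto_neg_atTop_atBot.comp hsq
    exact h.congr (fun t => by simp [Function.comp, neg_div])
  have h2 : Tendsto (fun x : ℝ => Real.exp (-(x ^ 2) / 2)) atBot (nhds 0) :=
    Real.tendsto_exp_atBot.comp h1
  have h3 := h2.const_mul (Real.sqrt (2 * Real.pi))⁻¹
  rw [mul_zero] at h3
  exact h3

lemma hasDerivAt_pdf (t : ℝ) : HasDerivAt stdNormalPDF (-t * stdNormalPDF t) t := by
  have h1 : HasDerivAt (fun y : ℝ => -(y ^ 2) / 2) (-t) t := by
    have := ((hasDerivAt_pow 2 t).neg).div_const 2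
    simpa using this.congr_deriv (by ring)
  have h2 := (h1.exp).const_mul (Real.sqrt (2 * Real.pi))⁻¹
  have : stdNormalPDF = fun y => (Real.sqrt (2 * Real.pi))⁻¹ * Real.exp (-(y ^ 2) / 2) := rfl
  rw [this]
  refine h2.congr_deriv ?_
  beta_reduce; ring

lemma integral_mul_pdf (x : ℝ) : ∫ t in Set.Iic x, t * stdNormalPDF t = -stdNormalPDF x := by
  have := integral_Iic_of_hasDerivAt_of_tendsto' (f := stdNormalPDF)
    (f' := fun t => -t * stdNormalPDF t) (a := x)
    (fun t _ => hasDerivAt_pdf t)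
    ((integrable_mul_pdf.neg.congr (by filter_upwards with t; simp only [Pi.neg_apply]; ring)).integrableOn)
    tendsto_pdf_atBot
  have h2 : ∫ t in Set.Iic x, -t * stdNormalPDF t = - ∫ t in Set.Iic x, t * stdNormalPDF t := by
    rw [← integral_neg]; congr 1; funext t; ring
  rw [h2] at this
  linarith [this]

lemma cdf_pos (x : ℝ) : 0 < stdNormalCDF x := by
  rw [stdNormalCDF, setIntegral_pos_iff_support_of_nonneg_ae
    (by filter_upwards with t using (pdf_pos t).le) integrable_pdf.integrableOn]
  have : Function.support stdNormalPDF = Set.univ := by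
    ext t; simp [(pdf_pos t).ne']
  rw [this, Set.univ_inter]
  simp [Real.volume_Iic]

/-- Gordon's Mill's-ratio inequality: `x + φ(x)/Φ(x) > 0` for all `x ∈ ℝ`. -/
theorem stmt_6 (x : ℝ) : 0 < x + stdNormalPDF x / stdNormalCDF x := by
  rcases le_or_gt 0 x with hx | hx
  · have := div_pos (pdf_pos x) (cdf_pos x)
    linarith
  · -- x < 0
    have key : 0 < ∫ t in Set.Iic x, (t / x - 1) * stdNormalPDF t := by
      rw [setIntegral_pos_iff_support_of_nonneg_ae]
      · have hsub : Set.Iio x ⊆ Function.support (fun t => (t / x - 1) * stdNormalPDF t) ∩ Set.Iic x := by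
          intro t ht
          refine ⟨?_, Set.mem_Iic.mpr (Set.mem_Iio.mp ht).le⟩
          have h1 : 1 < t / x := (one_lt_div_of_neg hx).mpr (Set.mem_Iio.mp ht)
          simp only [Function.mem_support]
          exact mul_ne_zero (by linarith) (pdf_pos t).ne'
        have h2 : (0:ENNReal) < volume (Set.Iio x) := by simp [Real.volume_Iio]
        exact lt_of_lt_of_le h2 (measure_mono hsub)
      · rw [EventuallyLE, ae_restrict_iff' measurableSet_Iic]
        filter_upwards with t ht
        have h1 : 1 ≤ t / x := (one_le_div_of_neg hx).mpr (Set.mem_Iic.mp ht)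
        have h2 := (pdf_pos t).le
        simp only [Pi.zero_apply]
        exact mul_nonneg (by linarith) h2
      · apply Integrable.integrableOn
        have : (fun t => (t / x - 1) * stdNormalPDF t) =
            fun t => x⁻¹ * (t * stdNormalPDF t) + (-1) * stdNormalPDF t := by
          funext t; field_simp; ring
        rw [this]
        exact (integrable_mul_pdf.const_mul _).add (integrable_pdf.const_mul _)
    have hsplit : ∫ t in Set.Iic x, (t / x - 1) * stdNormalPDF t
        = x⁻¹ * (∫ t in Set.Iic x, t * stdNormalPDF t) - stdNormalCDF x := by
      rw [stdNormalCDF, ← integral_const_mul, ← integral_sub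
        ((integrable_mul_pdf.const_mul _).integrableOn) integrable_pdf.integrableOn]
      congr 1; funext t; field_simp
    rw [hsplit, integral_mul_pdf] at key
    -- key : 0 < x⁻¹ * (-stdNormalPDF x) - stdNormalCDF x
    have hΦ := cdf_pos x
    have hφ := pdf_pos x
    -- stdNormalCDF x < -stdNormalPDF x / x
    rw [lt_sub_iff_add_lt, zero_add] at key
    -- Φ < x⁻¹ * (-φ)
    have hmul : -x * stdNormalCDF x < stdNormalPDF x := by
      have hx' : 0 < -x := by linarith
      calc -x * stdNormalCDF x < -x * (x⁻¹ * (-stdNormalPDF x)) := by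
            exact (mul_lt_mul_iff_right₀ hx').mpr key
        _ = stdNormalPDF x := by
            rw [show -x * (x⁻¹ * -stdNormalPDF x) = (x * x⁻¹) * stdNormalPDF x by ring,
              mul_inv_cancel₀ hx.ne, one_mul]
    have : -x < stdNormalPDF x / stdNormalCDF x := by
      rw [lt_div_iff₀ hΦ]; linarith [hmul]
    linarith
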